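/- Let r ≥ 4 and let V ∈ ℝ^(r+1) be an eigenvector of the (r+1) × (r+1) matrix N_r with eigenvalue λ. Define Φ(V) ∈ ℝ^(𝒫([r])) by (Φ(V))_T = V_{|T|} for each T ⊆ [r]. Then Φ(V) is an eigenvector of M_r with eigenvalue λ. -/

import Mathlib

/-- The matrix `M_r`, indexed by subsets `S, T ⊆ [r]`, with entry
`C(|S ∩ T|, 2) + C(|Sᶜ ∩ Tᶜ|, 2)`. -/
def Mmat (r : ℕ) : Matrix (Finset (Fin r)) (Finset (Fin r)) ℝ :=
  fun S T => ((S ∩ T).card.choose 2 : ℝ) + ((Sᶜ ∩ Tᶜ).card.choose 2 : ℝ)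

/-- The quotient matrix `N_r`, indexed by `s, t ∈ {0, …, r}`, with entry
`N_r(s,t) = Σ_{T ⊆ [r], |T| = t} M_r([s], T)`. -/
def Nmat (r : ℕ) : Matrix (Fin (r + 1)) (Fin (r + 1)) ℝ :=
  fun s t => ∑ T ∈ Finset.univ.filter (fun T : Finset (Fin r) => T.card = (t : ℕ)),
    Mmat r (Finset.univ.filter (fun i : Fin r => (i : ℕ) < (s : ℕ))) T

/-- The lift `Φ : ℝ^(r+1) → ℝ^(𝒫([r]))`, `(Φ V)_T = V_{|T|}`. -/
def Phi (r : ℕ) (V : Fin (r + 1) → ℝ) : Finset (Fin r) → ℝ :=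
  fun T => V ⟨T.card, Nat.lt_succ_of_le (by simpa using Finset.card_le_univ T)⟩

lemma card_filter_lt_eq (r s : ℕ) (h : s ≤ r) :
    (Finset.univ.filter (fun i : Fin r => (i : ℕ) < s)).card = s := by
  have : Finset.univ.filter (fun i : Fin r => (i : ℕ) < s)
      = (Finset.range s).attachFin (fun m hm => lt_of_lt_of_le (Finset.mem_range.mp hm) h) := by
    ext i; simp [Finset.mem_attachFin]
  rw [this, Finset.card_attachFin, Finset.card_range]

lemma map_compl_perm {α : Type*} [Fintype α] [DecidableEq α] (σ : Equiv.Perm α)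
    (S : Finset α) : (S.map σ.toEmbedding)ᶜ = Sᶜ.map σ.toEmbedding := by
  ext a
  simp [Finset.mem_map_equiv]

lemma exists_perm_map {α : Type*} [Fintype α] [DecidableEq α] (S₁ S₂ : Finset α)
    (h : S₁.card = S₂.card) : ∃ σ : Equiv.Perm α, S₁.map σ.toEmbedding = S₂ := by
  have hc : S₁ᶜ.card = S₂ᶜ.card := by
    simp [Finset.card_compl, h]
  let e1 : {a // a ∈ S₁} ≃ {a // a ∈ S₂} := Finset.equivOfCardEq h
  let e2 : {a // a ∉ S₁} ≃ {a // a ∉ S₂} :=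
    ((Equiv.subtypeEquivRight (fun a => (Finset.mem_compl).symm)).trans
      (Finset.equivOfCardEq hc)).trans
      (Equiv.subtypeEquivRight (fun a => Finset.mem_compl))
  refine ⟨(Equiv.sumCompl (· ∈ S₁)).symm.trans ((e1.sumCongr e2).trans
    (Equiv.sumCompl (· ∈ S₂))), ?_⟩
  apply Finset.eq_of_subset_of_card_le
  · intro a ha
    rw [Finset.mem_map] at ha
    obtain ⟨b, hb, rfl⟩ := ha
    simp only [Equiv.coe_toEmbedding, Equiv.trans_apply,
      Equiv.sumCompl_symm_apply_of_pos hb, Equiv.sumCongr_apply, Sum.map_inl,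
      Equiv.sumCompl_apply_inl]
    exact (e1 ⟨b, hb⟩).2
  · rw [Finset.card_map, h]

lemma Mmat_map (r : ℕ) (σ : Equiv.Perm (Fin r)) (S T : Finset (Fin r)) :
    Mmat r (S.map σ.toEmbedding) (T.map σ.toEmbedding) = Mmat r S T := by
  unfold Mmat
  rw [← Finset.map_inter, map_compl_perm, map_compl_perm, ← Finset.map_inter,
    Finset.card_map, Finset.card_map]

lemma sum_Mmat_eq (r t : ℕ) (S₁ S₂ : Finset (Fin r)) (h : S₁.card = S₂.card) :
    ∑ T ∈ Finset.univ.filter (fun T : Finset (Fin r) => T.card = t), Mmat r S₁ T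
      = ∑ T ∈ Finset.univ.filter (fun T : Finset (Fin r) => T.card = t), Mmat r S₂ T := by
  obtain ⟨σ, hσ⟩ := exists_perm_map S₁ S₂ h
  refine Finset.sum_nbij' (fun T => T.map σ.toEmbedding)
    (fun T => T.map σ.symm.toEmbedding) ?_ ?_ ?_ ?_ ?_
  · intro T hT
    simp only [Finset.mem_filter, Finset.mem_univ, true_and, Finset.card_map] at hT ⊢
    exact hT
  · intro T hT
    simp only [Finset.mem_filter, Finset.mem_univ, true_and, Finset.card_map] at hT ⊢
    exact hT
  · intro T _
    ext a; simp [Finset.mem_map_equiv]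
  · intro T _
    ext a; simp [Finset.mem_map_equiv]
  · intro T _
    rw [← hσ, Mmat_map]

/-- If `V` is an eigenvector of `N_r` with eigenvalue `λ`, then `Φ(V)` is an
eigenvector of `M_r` with eigenvalue `λ`. -/
theorem Phi_eigenvector (r : ℕ) (hr : 4 ≤ r) (V : Fin (r + 1) → ℝ) (lam : ℝ)
    (hV : V ≠ 0) (hEig : (Nmat r).mulVec V = lam • V) :
    (Mmat r).mulVec (Phi r V) = lam • Phi r V ∧ Phi r V ≠ 0 := by
  have key : ∀ S : Finset (Fin r), ∀ t : Fin (r + 1),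
      ∑ T ∈ Finset.univ.filter (fun T : Finset (Fin r) => T.card = (t : ℕ)), Mmat r S T
        = Nmat r ⟨S.card, Nat.lt_succ_of_le (by simpa using Finset.card_le_univ S)⟩ t := by
    intro S t
    unfold Nmat
    apply sum_Mmat_eq
    rw [card_filter_lt_eq r S.card (by simpa using Finset.card_le_univ S)]
  constructor
  · funext S
    have hS : S.card ≤ r := by simpa using Finset.card_le_univ S
    set sS : Fin (r + 1) := ⟨S.card, Nat.lt_succ_of_le hS⟩ with hsS
    have hfib : (Mmat r).mulVec (Phi r V) S
        = ∑ t : Fin (r + 1), ∑ T ∈ Finset.univ.filter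
            (fun T : Finset (Fin r) =>
              (⟨T.card, Nat.lt_succ_of_le (by simpa using Finset.card_le_univ T)⟩
                : Fin (r + 1)) = t),
            Mmat r S T * Phi r V T := by
      rw [Matrix.mulVec, dotProduct]
      exact (Finset.sum_fiberwise Finset.univ _ _).symm
    rw [hfib]
    have hstep : ∀ t : Fin (r + 1),
        (∑ T ∈ Finset.univ.filter
            (fun T : Finset (Fin r) =>
              (⟨T.card, Nat.lt_succ_of_le (by simpa using Finset.card_le_univ T)⟩
                : Fin (r + 1)) = t),
            Mmat r S T * Phi r V T) = Nmat r sS t * V t := by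
      intro t
      have hf : (Finset.univ.filter
            (fun T : Finset (Fin r) =>
              (⟨T.card, Nat.lt_succ_of_le (by simpa using Finset.card_le_univ T)⟩
                : Fin (r + 1)) = t))
          = Finset.univ.filter (fun T : Finset (Fin r) => T.card = (t : ℕ)) := by
        apply Finset.filter_congr
        intro T _
        simp [Fin.ext_iff]
      rw [hf]
      have hPhi : ∀ T ∈ Finset.univ.filter (fun T : Finset (Fin r) => T.card = (t : ℕ)),
          Mmat r S T * Phi r V T = Mmat r S T * V t := by
        intro T hT
        simp only [Finset.mem_filter, Finset.mem_univ, true_and] at hT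
        congr 1
        unfold Phi
        congr 1
        exact Fin.ext hT
      rw [Finset.sum_congr rfl hPhi, ← Finset.sum_mul, key S t]
    rw [Finset.sum_congr rfl (fun t _ => hstep t)]
    have := congrFun hEig sS
    rw [Matrix.mulVec, dotProduct] at this
    simp only [Pi.smul_apply, smul_eq_mul] at this ⊢
    rw [this]
    rfl
  · intro hcon
    apply hV
    funext s
    have hs : (s : ℕ) ≤ r := Nat.lt_succ_iff.mp s.2
    have := congrFun hcon (Finset.univ.filter (fun i : Fin r => (i : ℕ) < (s : ℕ)))
    unfold Phi at this
    rw [show (⟨(Finset.univ.filter (fun i : Fin r => (i : ℕ) < (s : ℕ))).card, _⟩ : Fin (r+1))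
        = s from Fin.ext (card_filter_lt_eq r s hs)] at this
    exact this
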